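/- If λ₁² + λ₂² + λ₃² ≤ 4/9, then the spin-1 polarization-scaling map Φ is positive, i.e., Φ(X) is positive semidefinite for every positive semidefinite X ∈ M₃(ℂ). -/

import Mathlib

set_option maxHeartbeats 1600000

open Matrix Kronecker
open scoped ComplexOrder

/-- The spin-1 angular momentum matrix J₁. -/
noncomputable def spinOneJ1 : Matrix (Fin 3) (Fin 3) ℂ :=
  ((1 / Real.sqrt 2 : ℝ) : ℂ) • !![0, 1, 0; 1, 0, 1; 0, 1, 0]

/-- The spin-1 angular momentum matrix J₂. -/
noncomputable def spinOneJ2 : Matrix (Fin 3) (Fin 3) ℂ :=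
  ((1 / Real.sqrt 2 : ℝ) : ℂ) • !![0, -Complex.I, 0; Complex.I, 0, -Complex.I; 0, Complex.I, 0]

/-- The spin-1 angular momentum matrix J₃. -/
def spinOneJ3 : Matrix (Fin 3) (Fin 3) ℂ := !![1, 0, 0; 0, 0, 0; 0, 0, -1]

/-- The spin-1 polarization-scaling map
`Φ(X) = (1/3)·tr(X)·I₃ + (1/2)·Σᵢ λᵢ·tr(X Jᵢ)·Jᵢ`. -/
noncomputable def Phi3 (l1 l2 l3 : ℝ) (X : Matrix (Fin 3) (Fin 3) ℂ) :
    Matrix (Fin 3) (Fin 3) ℂ :=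
  (1 / 3 : ℂ) • X.trace • (1 : Matrix (Fin 3) (Fin 3) ℂ) +
    (1 / 2 : ℂ) • ((l1 : ℂ) • (X * spinOneJ1).trace • spinOneJ1 +
      (l2 : ℂ) • (X * spinOneJ2).trace • spinOneJ2 +
      (l3 : ℂ) • (X * spinOneJ3).trace • spinOneJ3)

/-! ### Auxiliary scalar lemmas -/

private lemma lemA (a b c p1 p2 q1 q2 : ℝ) (ha : 0 ≤ a) (hb : 0 ≤ b) (hc : 0 ≤ c)
    (hP : p1^2+p2^2 ≤ a*b) (hQ : q1^2+q2^2 ≤ b*c) :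
    2*((p1+q1)^2+(p2+q2)^2) + (a-c)^2 ≤ (a+b+c)^2 := by
  have hPQ : (p1^2+p2^2)*(q1^2+q2^2) ≤ (a*b)*(b*c) :=
    mul_le_mul hP hQ (by positivity) (by positivity)
  have hr2 : (p1*q1+p2*q2)^2 ≤ (a*b)*(b*c) := by
    nlinarith [sq_nonneg (p1*q2 - p2*q1)]
  have key : (a*b)*(b*c) ≤ ((b^2+4*(a*c))/4)^2 := by
    nlinarith [sq_nonneg (b^2 - 4*(a*c))]
  have hr : 4*(p1*q1+p2*q2) ≤ b^2 + 4*(a*c) := by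
    by_contra hcon
    push_neg at hcon
    have h0 : (0:ℝ) ≤ b^2+4*(a*c) := by positivity
    have h1 : (b^2+4*(a*c))/4 < p1*q1+p2*q2 := by linarith
    have h2 : ((b^2+4*(a*c))/4)^2 < (p1*q1+p2*q2)^2 := by
      have := mul_self_lt_mul_self (by linarith) h1
      simpa [pow_two] using this
    linarith
  nlinarith [hr, hP, hQ]

private lemma lemC (l1 l2 l3 c1 c2 c3 d1 d2 d3 t n : ℝ)
    (hl : l1^2+l2^2+l3^2 ≤ 4/9) (hc : 2*c1^2+2*c2^2+c3^2 ≤ t^2)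
    (hd : 2*d1^2+2*d2^2+d3^2 ≤ n^2) (ht : 0 ≤ t) (hn : 0 ≤ n) :
    0 ≤ t*n/3 + l1*c1*d1 + l2*c2*d2 + l3*c3*d3/2 := by
  have h1 : (2*(l1*c1*d1) + 2*(l2*c2*d2) + l3*c3*d3)^2
      ≤ (l1^2+l2^2+l3^2)*((2*(c1*d1))^2+(2*(c2*d2))^2+(c3*d3)^2) := by
    nlinarith [sq_nonneg (l1*(2*(c2*d2))-l2*(2*(c1*d1))), sq_nonneg (l1*(c3*d3)-l3*(2*(c1*d1))),
      sq_nonneg (l2*(c3*d3)-l3*(2*(c2*d2)))]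
  have h2 : (2*(c1*d1))^2+(2*(c2*d2))^2+(c3*d3)^2
      ≤ (2*c1^2+2*c2^2+c3^2)*(2*d1^2+2*d2^2+d3^2) := by
    nlinarith [sq_nonneg (c1*d2), sq_nonneg (c1*d3), sq_nonneg (c2*d1), sq_nonneg (c2*d3),
      sq_nonneg (c3*d1), sq_nonneg (c3*d2)]
  have h3 : (2*c1^2+2*c2^2+c3^2)*(2*d1^2+2*d2^2+d3^2) ≤ t^2*n^2 :=
    mul_le_mul hc hd (by positivity) (by positivity)
  have h4 : (2*(l1*c1*d1) + 2*(l2*c2*d2) + l3*c3*d3)^2 ≤ (4/9)*(t^2*n^2) := by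
    have hcd0 : (0:ℝ) ≤ (2*(c1*d1))^2+(2*(c2*d2))^2+(c3*d3)^2 := by positivity
    have hl0 : (0:ℝ) ≤ l1^2+l2^2+l3^2 := by positivity
    nlinarith [h1, h2, h3]
  nlinarith [h4, mul_nonneg ht hn,
    sq_nonneg (t*n + 3/2*(2*(l1*c1*d1) + 2*(l2*c2*d2) + l3*c3*d3))]

private lemma lemB (a b P : ℝ) (ha : 0 ≤ a) (hb : 0 ≤ b) (hP0 : 0 ≤ P)
    (key : ∀ t : ℝ, 0 ≤ t^2*a - 2*t*P + P*b) : P ≤ a*b := by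
  rcases eq_or_lt_of_le hb with hb0 | hbpos
  · have hA : (0:ℝ) < a + 1 := by linarith
    set u := P/(a+1) with hu
    have hu0 : 0 ≤ u := by positivity
    have hP : P = u * (a+1) := by rw [hu]; field_simp
    have h := key u
    rw [← hb0] at h ⊢
    rw [hP] at h
    have h1 : u^2*(a+2) ≤ 0 := by nlinarith [h]
    have h2 : u^2 ≤ 0 := by nlinarith [h1, mul_nonneg ha (sq_nonneg u)]
    have h3 : u = 0 := by
      have := le_antisymm h2 (sq_nonneg u)
      exact pow_eq_zero_iff (by norm_num) |>.mp this
    rw [hP, h3]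
    simp
  · nlinarith [key b, hbpos, hP0]

/-! ### Reduction of the J-matrices -/

noncomputable abbrev M1' : Matrix (Fin 3) (Fin 3) ℂ := !![0, 1, 0; 1, 0, 1; 0, 1, 0]
noncomputable abbrev M2' : Matrix (Fin 3) (Fin 3) ℂ :=
  !![0, -Complex.I, 0; Complex.I, 0, -Complex.I; 0, Complex.I, 0]

private lemma hs2 : ((1 / Real.sqrt 2 : ℝ) : ℂ) * ((1 / Real.sqrt 2 : ℝ) : ℂ) = 1/2 := by
  have h : (1/Real.sqrt 2 : ℝ) * (1/Real.sqrt 2) = 1/2 := by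
    rw [div_mul_div_comm, one_mul, Real.mul_self_sqrt (by norm_num)]
  rw [← Complex.ofReal_mul, h]
  norm_num

private lemma J1_reduce (X : Matrix (Fin 3) (Fin 3) ℂ) :
    (X * spinOneJ1).trace • spinOneJ1 = ((1/2 : ℂ) * (X * M1').trace) • M1' := by
  rw [spinOneJ1, Matrix.mul_smul, trace_smul, smul_smul, smul_eq_mul]
  congr 1
  linear_combination (X*M1').trace * hs2

private lemma J2_reduce (X : Matrix (Fin 3) (Fin 3) ℂ) :
    (X * spinOneJ2).trace • spinOneJ2 = ((1/2 : ℂ) * (X * M2').trace) • M2' := by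
  rw [spinOneJ2, Matrix.mul_smul, trace_smul, smul_smul, smul_eq_mul]
  congr 1
  linear_combination (X*M2').trace * hs2

private lemma T1r (X : Matrix (Fin 3) (Fin 3) ℂ) :
    (X * M1').trace = X 0 1 + X 1 0 + X 1 2 + X 2 1 := by
  simp [trace_fin_three, Matrix.mul_apply, Fin.sum_univ_three]
  ring

private lemma T2r (X : Matrix (Fin 3) (Fin 3) ℂ) :
    (X * M2').trace = Complex.I * (X 0 1 - X 1 0 + X 1 2 - X 2 1) := by
  simp [trace_fin_three, Matrix.mul_apply, Fin.sum_univ_three]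
  ring

private lemma T3r (X : Matrix (Fin 3) (Fin 3) ℂ) : (X * spinOneJ3).trace = X 0 0 - X 2 2 := by
  simp [spinOneJ3, trace_fin_three, Matrix.mul_apply, Fin.sum_univ_three, Matrix.vecHead,
    Matrix.vecTail]
  ring

private lemma V1 (v : Fin 3 → ℂ) : M1' *ᵥ v = ![v 1, v 0 + v 2, v 1] := by
  ext i; fin_cases i <;> simp [mulVec, dotProduct, Fin.sum_univ_three]

private lemma V2 (v : Fin 3 → ℂ) :
    M2' *ᵥ v = ![-(Complex.I * v 1), Complex.I * v 0 - Complex.I * v 2, Complex.I * v 1] := by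
  ext i; fin_cases i <;> simp [mulVec, dotProduct, Fin.sum_univ_three] <;> ring

private lemma V3 (v : Fin 3 → ℂ) : spinOneJ3 *ᵥ v = ![v 0, 0, -(v 2)] := by
  ext i; fin_cases i <;> simp [spinOneJ3, mulVec, dotProduct, Fin.sum_univ_three]

/-- The main quadratic-form identity. -/
private lemma quad_identity (l1 l2 l3 : ℝ) (X : Matrix (Fin 3) (Fin 3) ℂ) (v : Fin 3 → ℂ)
    (h10 : X 1 0 = star (X 0 1)) (h21 : X 2 1 = star (X 1 2))
    (e0 : X 0 0 = ((X 0 0).re : ℂ)) (e1 : X 1 1 = ((X 1 1).re : ℂ))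
    (e2 : X 2 2 = ((X 2 2).re : ℂ)) :
    star v ⬝ᵥ (Phi3 l1 l2 l3 X) *ᵥ v =
      ((((X 0 0).re + (X 1 1).re + (X 2 2).re) *
          (((v 0).re^2 + (v 0).im^2) + ((v 1).re^2 + (v 1).im^2) + ((v 2).re^2 + (v 2).im^2)) / 3
        + l1 * ((X 0 1).re + (X 1 2).re) *
            ((v 0).re*(v 1).re + (v 0).im*(v 1).im + (v 1).re*(v 2).re + (v 1).im*(v 2).im)
        + l2 * (-((X 0 1).im + (X 1 2).im)) *
            (-(((v 0).im*(v 1).re - (v 0).re*(v 1).im) + ((v 1).im*(v 2).re - (v 1).re*(v 2).im)))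
        + l3 * ((X 0 0).re - (X 2 2).re) *
            (((v 0).re^2 + (v 0).im^2) - ((v 2).re^2 + (v 2).im^2)) / 2 : ℝ) : ℂ) := by
  rw [Phi3, Matrix.trace_fin_three, J1_reduce, J2_reduce, T1r, T2r, T3r, h10, h21, e0, e1, e2]
  simp only [Matrix.add_mulVec, Matrix.smul_mulVec, dotProduct_add, dotProduct_smul,
    Matrix.one_mulVec, smul_eq_mul, V1, V2, V3, dotProduct, Fin.sum_univ_three,
    Matrix.cons_val_zero, Matrix.cons_val_one, Matrix.head_cons, Matrix.cons_val_two,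
    Matrix.tail_cons, Pi.star_apply]
  apply Complex.ext <;>
  · simp [Complex.ext_iff, Complex.add_re, Complex.add_im, Complex.mul_re, Complex.mul_im,
      Complex.sub_re, Complex.sub_im, Complex.div_re, Complex.div_im, Complex.ofReal_re,
      Complex.ofReal_im, Complex.I_re, Complex.I_im, Complex.conj_re, Complex.conj_im,
      Complex.normSq_apply, pow_two]
    ring

theorem spin_one_map_positive_of_sum_sq_le (l1 l2 l3 : ℝ)
    (hlam : l1 ^ 2 + l2 ^ 2 + l3 ^ 2 ≤ 4 / 9) :
    ∀ X : Matrix (Fin 3) (Fin 3) ℂ, X.PosSemidef → (Phi3 l1 l2 l3 X).PosSemidef := by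
  intro X hX
  -- Hermitian entry facts
  have h10 : X 1 0 = star (X 0 1) := (hX.1.apply 1 0).symm
  have h21 : X 2 1 = star (X 1 2) := (hX.1.apply 2 1).symm
  have him : ∀ i : Fin 3, (X i i).im = 0 := by
    intro i
    have h := congrArg Complex.im (hX.1.apply i i)
    simp at h
    linarith
  have e0 : X 0 0 = ((X 0 0).re : ℂ) := by
    apply Complex.ext <;> simp [him 0]
  have e1 : X 1 1 = ((X 1 1).re : ℂ) := by
    apply Complex.ext <;> simp [him 1]
  have e2 : X 2 2 = ((X 2 2).re : ℂ) := by
    apply Complex.ext <;> simp [him 2]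
  -- diagonal entries are nonnegative
  have diag0 : 0 ≤ (X 0 0).re := by
    have h := hX.dotProduct_mulVec_nonneg ![1, 0, 0]
    rw [Complex.le_def] at h
    have := h.1
    simpa [dotProduct, mulVec, Fin.sum_univ_three] using this
  have diag1 : 0 ≤ (X 1 1).re := by
    have h := hX.dotProduct_mulVec_nonneg ![0, 1, 0]
    rw [Complex.le_def] at h
    have := h.1
    simpa [dotProduct, mulVec, Fin.sum_univ_three] using this
  have diag2 : 0 ≤ (X 2 2).re := by
    have h := hX.dotProduct_mulVec_nonneg ![0, 0, 1]
    rw [Complex.le_def] at h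
    have := h.1
    simpa [dotProduct, mulVec, Fin.sum_univ_three] using this
  -- off-diagonal bounds
  have hP01 : (X 0 1).re^2 + (X 0 1).im^2 ≤ (X 0 0).re * (X 1 1).re := by
    apply lemB _ _ _ diag0 diag1 (by positivity)
    intro t
    have h := hX.dotProduct_mulVec_nonneg ![(t : ℂ), -star (X 0 1), 0]
    rw [Complex.le_def] at h
    have h1 := h.1
    have heq : (star ![(t : ℂ), -star (X 0 1), 0] ⬝ᵥ X *ᵥ ![(t : ℂ), -star (X 0 1), 0]).re
        = t^2*(X 0 0).re - 2*t*((X 0 1).re^2 + (X 0 1).im^2)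
          + ((X 0 1).re^2 + (X 0 1).im^2)*(X 1 1).re := by
      rw [show (X *ᵥ ![(t : ℂ), -star (X 0 1), 0]) = fun i =>
          X i 0 * t - X i 1 * star (X 0 1) from by
        funext i; simp [mulVec, dotProduct, Fin.sum_univ_three]; ring]
      simp only [dotProduct, Fin.sum_univ_three, Pi.star_apply, Matrix.cons_val_zero,
        Matrix.cons_val_one, Matrix.head_cons, Matrix.cons_val_two, Matrix.tail_cons]
      rw [h10, e0, e1]
      simp [Complex.add_re, Complex.mul_re, Complex.mul_im, Complex.sub_re, pow_two]
      ring
    rw [heq] at h1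
    simpa using h1
  have hP12 : (X 1 2).re^2 + (X 1 2).im^2 ≤ (X 1 1).re * (X 2 2).re := by
    apply lemB _ _ _ diag1 diag2 (by positivity)
    intro t
    have h := hX.dotProduct_mulVec_nonneg ![0, (t : ℂ), -star (X 1 2)]
    rw [Complex.le_def] at h
    have h1 := h.1
    have heq : (star ![0, (t : ℂ), -star (X 1 2)] ⬝ᵥ X *ᵥ ![0, (t : ℂ), -star (X 1 2)]).re
        = t^2*(X 1 1).re - 2*t*((X 1 2).re^2 + (X 1 2).im^2)
          + ((X 1 2).re^2 + (X 1 2).im^2)*(X 2 2).re := by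
      rw [show (X *ᵥ ![0, (t : ℂ), -star (X 1 2)]) = fun i =>
          X i 1 * t - X i 2 * star (X 1 2) from by
        funext i; simp [mulVec, dotProduct, Fin.sum_univ_three]; ring]
      simp only [dotProduct, Fin.sum_univ_three, Pi.star_apply, Matrix.cons_val_zero,
        Matrix.cons_val_one, Matrix.head_cons, Matrix.cons_val_two, Matrix.tail_cons]
      rw [h21, e1, e2]
      simp [Complex.add_re, Complex.mul_re, Complex.mul_im, Complex.sub_re, pow_two]
      ring
    rw [heq] at h1
    simpa using h1
  refine Matrix.PosSemidef.of_dotProduct_mulVec_nonneg ?_ ?_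
  · -- Hermitian part
    have hJ1 : spinOneJ1ᴴ = spinOneJ1 := by
      ext i j
      fin_cases i <;> fin_cases j <;>
        simp [spinOneJ1, Matrix.conjTranspose_apply, Complex.conj_ofReal, Matrix.vecHead, Matrix.vecTail]
    have hJ2 : spinOneJ2ᴴ = spinOneJ2 := by
      ext i j
      fin_cases i <;> fin_cases j <;>
        simp [spinOneJ2, Matrix.conjTranspose_apply, Complex.conj_ofReal, Matrix.vecHead, Matrix.vecTail]
    have hJ3 : spinOneJ3ᴴ = spinOneJ3 := by
      ext i j
      fin_cases i <;> fin_cases j <;>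
        simp [spinOneJ3, Matrix.conjTranspose_apply, Matrix.vecHead, Matrix.vecTail]
    have htr : ∀ J : Matrix (Fin 3) (Fin 3) ℂ, Jᴴ = J →
        star (X * J).trace = (X * J).trace := by
      intro J hJ
      calc star (X * J).trace = ((X * J)ᴴ).trace := (Matrix.trace_conjTranspose _).symm
        _ = (Jᴴ * Xᴴ).trace := by rw [Matrix.conjTranspose_mul]
        _ = (J * X).trace := by rw [hJ, hX.1]
        _ = (X * J).trace := Matrix.trace_mul_comm _ _
    have htr0 : star X.trace = X.trace := by
      calc star X.trace = (Xᴴ).trace := (Matrix.trace_conjTranspose _).symm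
        _ = X.trace := by rw [hX.1]
    show (Phi3 l1 l2 l3 X)ᴴ = Phi3 l1 l2 l3 X
    simp only [Phi3, Matrix.conjTranspose_add, Matrix.conjTranspose_smul,
      Matrix.conjTranspose_one, hJ1, hJ2, hJ3, htr spinOneJ1 hJ1, htr spinOneJ2 hJ2,
      htr spinOneJ3 hJ3, htr0, star_trivial, Complex.star_def, map_div₀, _root_.map_one,
      Complex.conj_ofReal, map_ofNat]
  · -- positivity of the quadratic form
    intro v
    rw [quad_identity l1 l2 l3 X v h10 h21 e0 e1 e2]
    rw [Complex.le_def]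
    constructor
    · simp only [Complex.ofReal_re, Complex.zero_re]
      -- apply lemC
      set a := (X 0 0).re
      set b := (X 1 1).re
      set c := (X 2 2).re
      set p1 := (X 0 1).re
      set p2 := (X 0 1).im
      set q1 := (X 1 2).re
      set q2 := (X 1 2).im
      set w0r := (v 0).re
      set w0i := (v 0).im
      set w1r := (v 1).re
      set w1i := (v 1).im
      set w2r := (v 2).re
      set w2i := (v 2).im
      have ht : 0 ≤ a + b + c := by positivity
      have hn : 0 ≤ (w0r^2 + w0i^2) + (w1r^2 + w1i^2) + (w2r^2 + w2i^2) := by positivity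
      have hc' : 2*(p1 + q1)^2 + 2*(-(p2+q2))^2 + (a - c)^2 ≤ (a + b + c)^2 := by
        have := lemA a b c p1 p2 q1 q2 diag0 diag1 diag2 hP01 hP12
        nlinarith [this]
      have hd' : 2*(w0r*w1r + w0i*w1i + w1r*w2r + w1i*w2i)^2
          + 2*(-((w0i*w1r - w0r*w1i) + (w1i*w2r - w1r*w2i)))^2
          + ((w0r^2 + w0i^2) - (w2r^2 + w2i^2))^2
          ≤ ((w0r^2 + w0i^2) + (w1r^2 + w1i^2) + (w2r^2 + w2i^2))^2 := by
        have := lemA (w0r^2 + w0i^2) (w1r^2 + w1i^2) (w2r^2 + w2i^2)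
          (w0r*w1r + w0i*w1i) (w0i*w1r - w0r*w1i)
          (w1r*w2r + w1i*w2i) (w1i*w2r - w1r*w2i)
          (by positivity) (by positivity) (by positivity)
          (le_of_eq (by ring)) (le_of_eq (by ring))
        nlinarith [this]
      have hfin := lemC l1 l2 l3
        (p1 + q1) (-(p2+q2)) (a - c)
        (w0r*w1r + w0i*w1i + w1r*w2r + w1i*w2i)
        (-((w0i*w1r - w0r*w1i) + (w1i*w2r - w1r*w2i)))
        ((w0r^2 + w0i^2) - (w2r^2 + w2i^2))
        (a + b + c) ((w0r^2 + w0i^2) + (w1r^2 + w1i^2) + (w2r^2 + w2i^2))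
        hlam hc' hd' ht hn
      linarith [hfin]
    · simp [pow_two, Complex.mul_im]
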